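/- Subject to the constraints β₁, β₂, β₃, β₄ ≥ α and β₁ + β₂ + β₃ + β₄ = 1, where 0 < α ≤ 1/4, the product 24·β₁β₂β₃β₄ attains its minimum at β₁ = β₂ = β₃ = α and β₄ = 1 − 3α; hence 24·β₁β₂β₃β₄ ≥ 24·α³(1−3α) for all feasible (β₁,β₂,β₃,β₄). -/
import Mathlib


/-- Subject to `βᵢ ≥ α` and `β₁ + β₂ + β₃ + β₄ = 1` with `0 < α ≤ 1/4`, the product
`24·β₁β₂β₃β₄` is minimized at `β₁ = β₂ = β₃ = α`, `β₄ = 1 - 3α`; hence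
`24·β₁β₂β₃β₄ ≥ 24·α³(1 - 3α)`. -/
theorem stmt_4 (α β₁ β₂ β₃ β₄ : ℝ) (hα : 0 < α) (hα4 : α ≤ 1 / 4)
    (h1 : α ≤ β₁) (h2 : α ≤ β₂) (h3 : α ≤ β₃) (h4 : α ≤ β₄)
    (hsum : β₁ + β₂ + β₃ + β₄ = 1) :
    24 * (α ^ 3 * (1 - 3 * α)) ≤ 24 * (β₁ * β₂ * β₃ * β₄) := by
  have s1 : α * (β₁ + β₂ - α) ≤ β₁ * β₂ := by nlinarith [mul_nonneg (sub_nonneg.2 h1) (sub_nonneg.2 h2)]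
  have s2 : α ^ 2 * (β₁ + β₂ + β₃ - 2 * α) ≤ β₁ * β₂ * β₃ := by
    nlinarith [mul_le_mul_of_nonneg_right s1 (le_trans hα.le h3),
      mul_nonneg (mul_nonneg hα.le (sub_nonneg.2 (by linarith : α ≤ β₁ + β₂ - α))) (sub_nonneg.2 h3)]
  have s3 : α ^ 3 * (β₁ + β₂ + β₃ + β₄ - 3 * α) ≤ β₁ * β₂ * β₃ * β₄ := by
    nlinarith [mul_le_mul_of_nonneg_right s2 (le_trans hα.le h4),
      mul_nonneg (mul_nonneg (sq_nonneg α) (sub_nonneg.2 (by linarith : α ≤ β₁ + β₂ + β₃ - 2 * α))) (sub_nonneg.2 h4)]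
  rw [hsum] at s3
  linarith
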